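/- Let n ≥ 0 and let Ψ be a set-valued sheaf on smooth n-manifolds with a topological enhancement over ℝⁿ. Topologize Ψ(M) for every smooth n-manifold M by the affine-patch construction: choose an open cover of M by affine patches with diffeomorphisms to open subsets of ℝⁿ, transport the given topologies to the patches, and give Ψ(M) the subspace topology of the product over the patches (this is independent of choices). Then for every smooth n-manifold M and every open cover {Nᵢ} of M by arbitrary open subsets, the canonical injection Ψ(M) → ∏ᵢ Ψ(Nᵢ) is a topological embedding whose image is the set of compatible families (sᵢ) with sᵢ|_{Nᵢ ∩ Nⱼ} = sⱼ|_{Nᵢ ∩ Nⱼ}; that is, Ψ(M) is the equalizer in topological spaces of the two restriction maps ∏ᵢ Ψ(Nᵢ) ⇉ ∏_{(i,j)} Ψ(Nᵢ ∩ Nⱼ). (Lemma 3.6 of the paper: Ψ is a sheaf of topological spaces on smooth n-manifolds.) -/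

import Mathlib

set_option linter.unusedSectionVars false

open scoped Manifold
open TopologicalSpace Set

noncomputable section

/-- A map `f : N → M` between smooth `n`-manifolds is an *open smooth embedding* if it is
injective and a smooth local diffeomorphism; equivalently, it is a topological open embedding
which is a diffeomorphism onto its open image. -/
def IsOpenSmoothEmbedding (n : ℕ)
    {N : Type} [TopologicalSpace N] [ChartedSpace (EuclideanSpace ℝ (Fin n)) N]
    {M : Type} [TopologicalSpace M] [ChartedSpace (EuclideanSpace ℝ (Fin n)) M]
    (f : N → M) : Prop :=
  Function.Injective f ∧ IsLocalDiffeomorph (𝓡 n) (𝓡 n) (⊤ : ℕ∞) f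

theorem IsOpenSmoothEmbedding.continuous {n : ℕ}
    {N : Type} [TopologicalSpace N] [ChartedSpace (EuclideanSpace ℝ (Fin n)) N]
    {M : Type} [TopologicalSpace M] [ChartedSpace (EuclideanSpace ℝ (Fin n)) M]
    {f : N → M} (hf : IsOpenSmoothEmbedding n f) : Continuous f :=
  hf.2.contMDiff.continuous

/-- A set-valued sheaf `Ψ` on the site of smooth `n`-manifolds (second countable, Hausdorff,
without boundary) and open smooth embeddings, presented in terms of its sections over the open
subsets of each smooth `n`-manifold.  `sect M U` is the set `Ψ(U)` of sections over the open
subset `U ⊆ M`; `res` is restriction to a smaller open subset, `pull` is pullback along an open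
smooth embedding of manifolds, and `pullD` is pullback along a (partial) diffeomorphism between
an open subset of one manifold and an open subset of another.  These operations are functorial
and satisfy the sheaf condition for arbitrary open covers. -/
structure SetSheaf (n : ℕ) : Type 1 where
  sect : ∀ (M : Type) [TopologicalSpace M] [ChartedSpace (EuclideanSpace ℝ (Fin n)) M]
      [IsManifold (𝓡 n) (⊤ : ℕ∞) M] [SecondCountableTopology M] [T2Space M],
      Opens M → Type
  res : ∀ (M : Type) [TopologicalSpace M] [ChartedSpace (EuclideanSpace ℝ (Fin n)) M]
      [IsManifold (𝓡 n) (⊤ : ℕ∞) M] [SecondCountableTopology M] [T2Space M]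
      {U V : Opens M}, V ≤ U → sect M U → sect M V
  res_id : ∀ (M : Type) [TopologicalSpace M] [ChartedSpace (EuclideanSpace ℝ (Fin n)) M]
      [IsManifold (𝓡 n) (⊤ : ℕ∞) M] [SecondCountableTopology M] [T2Space M]
      (U : Opens M) (s : sect M U), res M (le_refl U) s = s
  res_comp : ∀ (M : Type) [TopologicalSpace M] [ChartedSpace (EuclideanSpace ℝ (Fin n)) M]
      [IsManifold (𝓡 n) (⊤ : ℕ∞) M] [SecondCountableTopology M] [T2Space M]
      {U V W : Opens M} (hVU : V ≤ U) (hWV : W ≤ V) (s : sect M U),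
      res M hWV (res M hVU s) = res M (hWV.trans hVU) s
  pull : ∀ (N : Type) [TopologicalSpace N] [ChartedSpace (EuclideanSpace ℝ (Fin n)) N]
      [IsManifold (𝓡 n) (⊤ : ℕ∞) N] [SecondCountableTopology N] [T2Space N]
      (M : Type) [TopologicalSpace M] [ChartedSpace (EuclideanSpace ℝ (Fin n)) M]
      [IsManifold (𝓡 n) (⊤ : ℕ∞) M] [SecondCountableTopology M] [T2Space M]
      (f : N → M) (hf : IsOpenSmoothEmbedding n f) (U : Opens M),
      sect M U → sect N ⟨f ⁻¹' (U : Set M), U.isOpen.preimage hf.continuous⟩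
  pull_id : ∀ (M : Type) [TopologicalSpace M] [ChartedSpace (EuclideanSpace ℝ (Fin n)) M]
      [IsManifold (𝓡 n) (⊤ : ℕ∞) M] [SecondCountableTopology M] [T2Space M]
      (hid : IsOpenSmoothEmbedding n (id : M → M)) (U : Opens M) (s : sect M U),
      pull M M id hid U s = s
  pull_comp : ∀ (P : Type) [TopologicalSpace P] [ChartedSpace (EuclideanSpace ℝ (Fin n)) P]
      [IsManifold (𝓡 n) (⊤ : ℕ∞) P] [SecondCountableTopology P] [T2Space P]
      (N : Type) [TopologicalSpace N] [ChartedSpace (EuclideanSpace ℝ (Fin n)) N]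
      [IsManifold (𝓡 n) (⊤ : ℕ∞) N] [SecondCountableTopology N] [T2Space N]
      (M : Type) [TopologicalSpace M] [ChartedSpace (EuclideanSpace ℝ (Fin n)) M]
      [IsManifold (𝓡 n) (⊤ : ℕ∞) M] [SecondCountableTopology M] [T2Space M]
      (g : P → N) (f : N → M) (hg : IsOpenSmoothEmbedding n g)
      (hf : IsOpenSmoothEmbedding n f) (hfg : IsOpenSmoothEmbedding n (f ∘ g))
      (U : Opens M) (s : sect M U),
      pull P N g hg _ (pull N M f hf U s) = pull P M (f ∘ g) hfg U s
  pull_res : ∀ (N : Type) [TopologicalSpace N] [ChartedSpace (EuclideanSpace ℝ (Fin n)) N]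
      [IsManifold (𝓡 n) (⊤ : ℕ∞) N] [SecondCountableTopology N] [T2Space N]
      (M : Type) [TopologicalSpace M] [ChartedSpace (EuclideanSpace ℝ (Fin n)) M]
      [IsManifold (𝓡 n) (⊤ : ℕ∞) M] [SecondCountableTopology M] [T2Space M]
      (f : N → M) (hf : IsOpenSmoothEmbedding n f) {U V : Opens M} (h : V ≤ U)
      (s : sect M U),
      pull N M f hf V (res M h s)
        = res N (fun _ hx => h hx) (pull N M f hf U s)
  pullD : ∀ (N : Type) [TopologicalSpace N] [ChartedSpace (EuclideanSpace ℝ (Fin n)) N]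
      [IsManifold (𝓡 n) (⊤ : ℕ∞) N] [SecondCountableTopology N] [T2Space N]
      (M : Type) [TopologicalSpace M] [ChartedSpace (EuclideanSpace ℝ (Fin n)) M]
      [IsManifold (𝓡 n) (⊤ : ℕ∞) M] [SecondCountableTopology M] [T2Space M]
      (e : OpenPartialHomeomorph N M),
      ContMDiffOn (𝓡 n) (𝓡 n) (⊤ : ℕ∞) e e.source →
      ContMDiffOn (𝓡 n) (𝓡 n) (⊤ : ℕ∞) e.symm e.target →
      ∀ (V : Opens N) (U : Opens M), (V : Set N) ⊆ e.source → e '' (V : Set N) = (U : Set M) →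
      sect M U → sect N V
  pullD_refl : ∀ (M : Type) [TopologicalSpace M] [ChartedSpace (EuclideanSpace ℝ (Fin n)) M]
      [IsManifold (𝓡 n) (⊤ : ℕ∞) M] [SecondCountableTopology M] [T2Space M]
      (h₁ : ContMDiffOn (𝓡 n) (𝓡 n) (⊤ : ℕ∞) (OpenPartialHomeomorph.refl M) (OpenPartialHomeomorph.refl M).source)
      (h₂ : ContMDiffOn (𝓡 n) (𝓡 n) (⊤ : ℕ∞) (OpenPartialHomeomorph.refl M).symm (OpenPartialHomeomorph.refl M).target)
      (V : Opens M) (s : sect M V),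
      pullD M M (OpenPartialHomeomorph.refl M) h₁ h₂ V V (subset_univ _) (image_id _) s = s
  pullD_res : ∀ (N : Type) [TopologicalSpace N] [ChartedSpace (EuclideanSpace ℝ (Fin n)) N]
      [IsManifold (𝓡 n) (⊤ : ℕ∞) N] [SecondCountableTopology N] [T2Space N]
      (M : Type) [TopologicalSpace M] [ChartedSpace (EuclideanSpace ℝ (Fin n)) M]
      [IsManifold (𝓡 n) (⊤ : ℕ∞) M] [SecondCountableTopology M] [T2Space M]
      (e : OpenPartialHomeomorph N M)
      (h₁ : ContMDiffOn (𝓡 n) (𝓡 n) (⊤ : ℕ∞) e e.source)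
      (h₂ : ContMDiffOn (𝓡 n) (𝓡 n) (⊤ : ℕ∞) e.symm e.target)
      {V' V : Opens N} {U' U : Opens M} (hV : (V : Set N) ⊆ e.source)
      (hV' : (V' : Set N) ⊆ e.source)
      (hU : e '' (V : Set N) = (U : Set M)) (hU' : e '' (V' : Set N) = (U' : Set M))
      (hVV' : V' ≤ V) (hUU' : U' ≤ U) (s : sect M U),
      res N hVV' (pullD N M e h₁ h₂ V U hV hU s)
        = pullD N M e h₁ h₂ V' U' hV' hU' (res M hUU' s)
  pullD_trans : ∀ (P : Type) [TopologicalSpace P] [ChartedSpace (EuclideanSpace ℝ (Fin n)) P]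
      [IsManifold (𝓡 n) (⊤ : ℕ∞) P] [SecondCountableTopology P] [T2Space P]
      (N : Type) [TopologicalSpace N] [ChartedSpace (EuclideanSpace ℝ (Fin n)) N]
      [IsManifold (𝓡 n) (⊤ : ℕ∞) N] [SecondCountableTopology N] [T2Space N]
      (M : Type) [TopologicalSpace M] [ChartedSpace (EuclideanSpace ℝ (Fin n)) M]
      [IsManifold (𝓡 n) (⊤ : ℕ∞) M] [SecondCountableTopology M] [T2Space M]
      (e : OpenPartialHomeomorph P N) (f : OpenPartialHomeomorph N M)
      (he₁ : ContMDiffOn (𝓡 n) (𝓡 n) (⊤ : ℕ∞) e e.source)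
      (he₂ : ContMDiffOn (𝓡 n) (𝓡 n) (⊤ : ℕ∞) e.symm e.target)
      (hf₁ : ContMDiffOn (𝓡 n) (𝓡 n) (⊤ : ℕ∞) f f.source)
      (hf₂ : ContMDiffOn (𝓡 n) (𝓡 n) (⊤ : ℕ∞) f.symm f.target)
      (hef₁ : ContMDiffOn (𝓡 n) (𝓡 n) (⊤ : ℕ∞) (e.trans f) (e.trans f).source)
      (hef₂ : ContMDiffOn (𝓡 n) (𝓡 n) (⊤ : ℕ∞) (e.trans f).symm (e.trans f).target)
      (W : Opens P) (V : Opens N) (U : Opens M)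
      (hW : (W : Set P) ⊆ e.source) (hV : e '' (W : Set P) = (V : Set N))
      (hV' : (V : Set N) ⊆ f.source) (hU : f '' (V : Set N) = (U : Set M))
      (hW' : (W : Set P) ⊆ (e.trans f).source)
      (hU' : (e.trans f) '' (W : Set P) = (U : Set M))
      (s : sect M U),
      pullD P N e he₁ he₂ W V hW hV (pullD N M f hf₁ hf₂ V U hV' hU s)
        = pullD P M (e.trans f) hef₁ hef₂ W U hW' hU' s
  pull_pullD : ∀ (N : Type) [TopologicalSpace N] [ChartedSpace (EuclideanSpace ℝ (Fin n)) N]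
      [IsManifold (𝓡 n) (⊤ : ℕ∞) N] [SecondCountableTopology N] [T2Space N]
      (M : Type) [TopologicalSpace M] [ChartedSpace (EuclideanSpace ℝ (Fin n)) M]
      [IsManifold (𝓡 n) (⊤ : ℕ∞) M] [SecondCountableTopology M] [T2Space M]
      (f : N → M) (hf : IsOpenSmoothEmbedding n f) (e : OpenPartialHomeomorph N M)
      (h₁ : ContMDiffOn (𝓡 n) (𝓡 n) (⊤ : ℕ∞) e e.source)
      (h₂ : ContMDiffOn (𝓡 n) (𝓡 n) (⊤ : ℕ∞) e.symm e.target)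
      (hef : EqOn f e e.source)
      (V : Opens N) (U : Opens M) (hV : (V : Set N) ⊆ e.source)
      (hU : e '' (V : Set N) = (U : Set M)) (s : sect M U),
      pullD N M e h₁ h₂ V U hV hU s
        = res N (fun x hx => by
            show f x ∈ (U : Set M)
            rw [← hU]
            exact ⟨x, hx, (hef (hV hx)).symm⟩)
          (pull N M f hf U s)
  locality : ∀ (M : Type) [TopologicalSpace M] [ChartedSpace (EuclideanSpace ℝ (Fin n)) M]
      [IsManifold (𝓡 n) (⊤ : ℕ∞) M] [SecondCountableTopology M] [T2Space M]
      {ι : Type} (U : ι → Opens M) (s t : sect M (⨆ i, U i)),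
      (∀ i, res M (le_iSup U i) s = res M (le_iSup U i) t) → s = t
  gluing : ∀ (M : Type) [TopologicalSpace M] [ChartedSpace (EuclideanSpace ℝ (Fin n)) M]
      [IsManifold (𝓡 n) (⊤ : ℕ∞) M] [SecondCountableTopology M] [T2Space M]
      {ι : Type} (U : ι → Opens M) (s : ∀ i, sect M (U i)),
      (∀ i j, res M (inf_le_left : U i ⊓ U j ≤ U i) (s i)
        = res M (inf_le_right : U i ⊓ U j ≤ U j) (s j)) →
      ∃ σ : sect M (⨆ i, U i), ∀ i, res M (le_iSup U i) σ = s i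

/-- A topological enhancement of a set-valued sheaf on smooth `n`-manifolds over `ℝⁿ`:
a topology on the set of sections over every open subset of `ℝⁿ` such that (a) restriction to a
smaller open subset is continuous, (b) pullback along every diffeomorphism between open subsets
of `ℝⁿ` is a homeomorphism, and (c) for every open cover the canonical injection into the
product of the spaces of local sections is a topological embedding. -/
structure TopEnhancement (n : ℕ) (Ψ : SetSheaf n) : Type 1 where
  τ : ∀ U : Opens (EuclideanSpace ℝ (Fin n)),
      TopologicalSpace (Ψ.sect (EuclideanSpace ℝ (Fin n)) U)
  continuous_res : ∀ {U V : Opens (EuclideanSpace ℝ (Fin n))} (h : V ≤ U),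
      @Continuous _ _ (τ U) (τ V) (Ψ.res _ h)
  isHomeomorph_pullD :
    ∀ (e : OpenPartialHomeomorph (EuclideanSpace ℝ (Fin n)) (EuclideanSpace ℝ (Fin n)))
      (h₁ : ContMDiffOn (𝓡 n) (𝓡 n) (⊤ : ℕ∞) e e.source)
      (h₂ : ContMDiffOn (𝓡 n) (𝓡 n) (⊤ : ℕ∞) e.symm e.target)
      (V U : Opens (EuclideanSpace ℝ (Fin n)))
      (hV : (V : Set (EuclideanSpace ℝ (Fin n))) ⊆ e.source)
      (hU : e '' (V : Set (EuclideanSpace ℝ (Fin n))) = (U : Set (EuclideanSpace ℝ (Fin n)))),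
      @IsHomeomorph _ _ (τ U) (τ V) (Ψ.pullD _ _ e h₁ h₂ V U hV hU)
  isEmbedding_cover : ∀ {ι : Type} (U : ι → Opens (EuclideanSpace ℝ (Fin n))),
      @Topology.IsEmbedding _ _ (τ (⨆ i, U i)) (@Pi.topologicalSpace ι _ (fun i => τ (U i)))
        (fun s i => Ψ.res _ (le_iSup U i) s)
/-- The affine-patch topology on the set of sections of `Ψ` over an open subset `U` of a smooth
`n`-manifold `M`, relative to a family of smooth diffeomorphisms `e i` from open subsets of `M`
contained in `U` onto open subsets of `ℝⁿ` (the affine patches): each set of sections over a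
patch `(e i).source` is topologised by transporting the given topology on the sections over the
open subset `(e i).target ⊆ ℝⁿ` along the bijection given by pullback along `e i`, and the
sections over `U` get the initial (subspace) topology induced by the canonical injection into
the product of the sections over the patches. -/
def patchTop (n : ℕ) (Ψ : SetSheaf n) (T : TopEnhancement n Ψ)
    (M : Type) [TopologicalSpace M] [ChartedSpace (EuclideanSpace ℝ (Fin n)) M]
    [IsManifold (𝓡 n) (⊤ : ℕ∞) M] [SecondCountableTopology M] [T2Space M]
    (U : Opens M) {ι : Type} (e : ι → OpenPartialHomeomorph M (EuclideanSpace ℝ (Fin n)))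
    (hsm : ∀ i, ContMDiffOn (𝓡 n) (𝓡 n) (⊤ : ℕ∞) (e i) (e i).source)
    (hsm' : ∀ i, ContMDiffOn (𝓡 n) (𝓡 n) (⊤ : ℕ∞) (e i).symm (e i).target)
    (hsub : ∀ i, (e i).source ⊆ (U : Set M)) :
    TopologicalSpace (Ψ.sect M U) :=
  TopologicalSpace.induced
    (fun s i => Ψ.res M
      (show (⟨(e i).source, (e i).open_source⟩ : Opens M) ≤ U from hsub i) s)
    (@Pi.topologicalSpace ι _ (fun i =>
      TopologicalSpace.coinduced
        (Ψ.pullD M (EuclideanSpace ℝ (Fin n)) (e i) (hsm i) (hsm' i)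
          ⟨(e i).source, (e i).open_source⟩ ⟨(e i).target, (e i).open_target⟩
          subset_rfl (e i).image_source_eq_target)
        (T.τ ⟨(e i).target, (e i).open_target⟩)))
section Helpers

variable {n : ℕ}

/-- The identity is an open smooth embedding. -/
lemma id_isOpenSmoothEmbedding
    (A : Type) [TopologicalSpace A] [ChartedSpace (EuclideanSpace ℝ (Fin n)) A]
    [IsManifold (𝓡 n) (⊤ : ℕ∞) A] :
    IsOpenSmoothEmbedding n (id : A → A) := by
  refine ⟨Function.injective_id, ?_⟩
  have h := (Diffeomorph.refl (𝓡 n) A ((⊤ : ℕ∞) : WithTop ℕ∞)).isLocalDiffeomorph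
  rwa [Diffeomorph.coe_refl] at h

variable {A : Type} [TopologicalSpace A] [ChartedSpace (EuclideanSpace ℝ (Fin n)) A]
  [IsManifold (𝓡 n) (⊤ : ℕ∞) A] [SecondCountableTopology A] [T2Space A]
variable {B : Type} [TopologicalSpace B] [ChartedSpace (EuclideanSpace ℝ (Fin n)) B]
  [IsManifold (𝓡 n) (⊤ : ℕ∞) B] [SecondCountableTopology B] [T2Space B]
variable {C : Type} [TopologicalSpace C] [ChartedSpace (EuclideanSpace ℝ (Fin n)) C]
  [IsManifold (𝓡 n) (⊤ : ℕ∞) C] [SecondCountableTopology C] [T2Space C]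

/-- Composition of partial diffeomorphisms is smooth on its source. -/
lemma transSmooth (e : OpenPartialHomeomorph A B) (f : OpenPartialHomeomorph B C)
    (he : ContMDiffOn (𝓡 n) (𝓡 n) (⊤ : ℕ∞) e e.source)
    (hf : ContMDiffOn (𝓡 n) (𝓡 n) (⊤ : ℕ∞) f f.source) :
    ContMDiffOn (𝓡 n) (𝓡 n) (⊤ : ℕ∞) (e.trans f) (e.trans f).source := by
  rw [OpenPartialHomeomorph.coe_trans, OpenPartialHomeomorph.trans_source]
  exact hf.comp (he.mono inter_subset_left) (fun x hx => hx.2)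

lemma transSmoothSymm (e : OpenPartialHomeomorph A B) (f : OpenPartialHomeomorph B C)
    (he : ContMDiffOn (𝓡 n) (𝓡 n) (⊤ : ℕ∞) e.symm e.target)
    (hf : ContMDiffOn (𝓡 n) (𝓡 n) (⊤ : ℕ∞) f.symm f.target) :
    ContMDiffOn (𝓡 n) (𝓡 n) (⊤ : ℕ∞) (e.trans f).symm (e.trans f).target := by
  have := transSmooth f.symm e.symm hf he
  exact this

/-- Pullback along a partial self-diffeomorphism that agrees with the identity on its source
is the identity. -/
lemma pullD_ofEqOnId (Ψ : SetSheaf n) (φ : OpenPartialHomeomorph A A)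
    (h₁ : ContMDiffOn (𝓡 n) (𝓡 n) (⊤ : ℕ∞) φ φ.source)
    (h₂ : ContMDiffOn (𝓡 n) (𝓡 n) (⊤ : ℕ∞) φ.symm φ.target)
    (V : Opens A) (hV : (V : Set A) ⊆ φ.source) (hU : φ '' (V : Set A) = (V : Set A))
    (hid : EqOn (id : A → A) φ φ.source)
    (s : Ψ.sect A V) :
    Ψ.pullD A A φ h₁ h₂ V V hV hU s = s := by
  rw [Ψ.pull_pullD A A id (id_isOpenSmoothEmbedding A) φ h₁ h₂ hid V V hV hU s]
  rw [Ψ.pull_id A (id_isOpenSmoothEmbedding A) V s]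
  exact Ψ.res_id A V s

/-- `pullD e.symm ∘ pullD e = id`. -/
lemma pullD_right_inv (Ψ : SetSheaf n) (e : OpenPartialHomeomorph A B)
    (h₁ : ContMDiffOn (𝓡 n) (𝓡 n) (⊤ : ℕ∞) e e.source)
    (h₂ : ContMDiffOn (𝓡 n) (𝓡 n) (⊤ : ℕ∞) e.symm e.target)
    (V : Opens A) (U : Opens B) (hV : (V : Set A) ⊆ e.source)
    (hU : e '' (V : Set A) = (U : Set B))
    (hV' : (U : Set B) ⊆ e.symm.source) (hU' : e.symm '' (U : Set B) = (V : Set A))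
    (s : Ψ.sect B U) :
    Ψ.pullD B A e.symm h₂ h₁ U V hV' hU' (Ψ.pullD A B e h₁ h₂ V U hV hU s) = s := by
  have hWs : (U : Set B) ⊆ (e.symm.trans e).source := by
    rw [OpenPartialHomeomorph.trans_source]
    exact fun x hx => ⟨hV' hx, show e.symm x ∈ e.source from hV (by
      rw [← hU']; exact mem_image_of_mem _ hx)⟩
  have hid : EqOn (id : B → B) (e.symm.trans e) (e.symm.trans e).source := by
    intro x hx
    rw [OpenPartialHomeomorph.trans_source] at hx
    exact (e.right_inv hx.1).symm
  have hUid : (e.symm.trans e) '' (U : Set B) = (U : Set B) := by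
    rw [(hid.symm.mono hWs).image_eq, image_id]
  rw [Ψ.pullD_trans B A B e.symm e h₂ h₁ h₁ h₂
    (transSmooth e.symm e h₂ h₁) (transSmoothSymm e.symm e h₁ h₂)
    U V U hV' hU' hV hU hWs hUid s]
  exact pullD_ofEqOnId Ψ _ _ _ U hWs hUid hid s

/-- `pullD e ∘ pullD e.symm = id`. -/
lemma pullD_left_inv (Ψ : SetSheaf n) (e : OpenPartialHomeomorph A B)
    (h₁ : ContMDiffOn (𝓡 n) (𝓡 n) (⊤ : ℕ∞) e e.source)
    (h₂ : ContMDiffOn (𝓡 n) (𝓡 n) (⊤ : ℕ∞) e.symm e.target)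
    (V : Opens A) (U : Opens B) (hV : (V : Set A) ⊆ e.source)
    (hU : e '' (V : Set A) = (U : Set B))
    (hV' : (U : Set B) ⊆ e.symm.source) (hU' : e.symm '' (U : Set B) = (V : Set A))
    (s : Ψ.sect A V) :
    Ψ.pullD A B e h₁ h₂ V U hV hU (Ψ.pullD B A e.symm h₂ h₁ U V hV' hU' s) = s := by
  have hWs : (V : Set A) ⊆ (e.trans e.symm).source := by
    rw [OpenPartialHomeomorph.trans_source]
    exact fun x hx => ⟨hV hx, by
      show e x ∈ e.symm.source
      exact hV' (hU ▸ mem_image_of_mem _ hx)⟩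
  have hid : EqOn (id : A → A) (e.trans e.symm) (e.trans e.symm).source := by
    intro x hx
    rw [OpenPartialHomeomorph.trans_source] at hx
    exact (e.left_inv hx.1).symm
  have hUid : (e.trans e.symm) '' (V : Set A) = (V : Set A) := by
    rw [(hid.symm.mono hWs).image_eq, image_id]
  rw [Ψ.pullD_trans A B A e e.symm h₁ h₂ h₂ h₁
    (transSmooth e e.symm h₁ h₂) (transSmoothSymm e e.symm h₂ h₁)
    V U V hV hU hV' hU' hWs hUid s]
  exact pullD_ofEqOnId Ψ _ _ _ V hWs hUid hid s

lemma coinduced_eq_induced_of_inverse {α β : Type} (f : α → β) (g : β → α)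
    (hgf : ∀ a, g (f a) = a) (hfg : ∀ b, f (g b) = b) (t : TopologicalSpace α) :
    t.coinduced f = t.induced g :=
  (congrFun (Equiv.induced_symm ⟨f, g, hgf, hfg⟩) t).symm

lemma patchTop_eq_iInf (Ψ : SetSheaf n) (T : TopEnhancement n Ψ)
    (U : Opens A) {κ : Type} (e : κ → OpenPartialHomeomorph A (EuclideanSpace ℝ (Fin n)))
    (hsm : ∀ i, ContMDiffOn (𝓡 n) (𝓡 n) (⊤ : ℕ∞) (e i) (e i).source)
    (hsm' : ∀ i, ContMDiffOn (𝓡 n) (𝓡 n) (⊤ : ℕ∞) (e i).symm (e i).target)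
    (hsub : ∀ i, (e i).source ⊆ (U : Set A)) :
    patchTop n Ψ T A U e hsm hsm' hsub
      = ⨅ i, TopologicalSpace.induced
          (fun s => Ψ.res A
            (show (⟨(e i).source, (e i).open_source⟩ : Opens A) ≤ U from hsub i) s)
          (TopologicalSpace.coinduced
            (Ψ.pullD A (EuclideanSpace ℝ (Fin n)) (e i) (hsm i) (hsm' i)
              ⟨(e i).source, (e i).open_source⟩ ⟨(e i).target, (e i).open_target⟩
              subset_rfl (e i).image_source_eq_target)
            (T.τ ⟨(e i).target, (e i).open_target⟩)) := by
  unfold patchTop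
  refine Eq.trans induced_iInf (iInf_congr fun i => ?_)
  exact induced_compose

/-- The key continuity lemma: the affine-patch topology relative to a covering family of
patches makes the restriction to (the transported topology on) any further affine patch
continuous. -/
lemma patchTop_le_component (Ψ : SetSheaf n) (T : TopEnhancement n Ψ)
    (U : Opens A) {κ : Type} (d : κ → OpenPartialHomeomorph A (EuclideanSpace ℝ (Fin n)))
    (hsm : ∀ j, ContMDiffOn (𝓡 n) (𝓡 n) (⊤ : ℕ∞) (d j) (d j).source)
    (hsm' : ∀ j, ContMDiffOn (𝓡 n) (𝓡 n) (⊤ : ℕ∞) (d j).symm (d j).target)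
    (hsub : ∀ j, (d j).source ⊆ (U : Set A))
    (hcov : (⋃ j, (d j).source) = (U : Set A))
    (f : OpenPartialHomeomorph A (EuclideanSpace ℝ (Fin n)))
    (hf₁ : ContMDiffOn (𝓡 n) (𝓡 n) (⊤ : ℕ∞) f f.source)
    (hf₂ : ContMDiffOn (𝓡 n) (𝓡 n) (⊤ : ℕ∞) f.symm f.target)
    (hfU : f.source ⊆ (U : Set A)) :
    patchTop n Ψ T A U d hsm hsm' hsub ≤
      TopologicalSpace.induced
        (fun s => Ψ.res A (show (⟨f.source, f.open_source⟩ : Opens A) ≤ U from hfU) s)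
        (TopologicalSpace.coinduced
          (Ψ.pullD A (EuclideanSpace ℝ (Fin n)) f hf₁ hf₂ ⟨f.source, f.open_source⟩
            ⟨f.target, f.open_target⟩ subset_rfl f.image_source_eq_target)
          (T.τ ⟨f.target, f.open_target⟩)) := by
  -- notation
  set srcO : Opens A := ⟨f.source, f.open_source⟩ with hsrcO
  set tgtO : Opens (EuclideanSpace ℝ (Fin n)) := ⟨f.target, f.open_target⟩ with htgtO
  have hsymm_img_gen : ∀ (e : OpenPartialHomeomorph A (EuclideanSpace ℝ (Fin n))) (s : Set A),
      s ⊆ e.source → e.symm '' (e '' s) = s := by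
    intro e s hs
    rw [← image_comp]
    have h : EqOn (⇑e.symm ∘ ⇑e) id s := fun x hx => e.left_inv (hs hx)
    rw [h.image_eq, image_id]
  have hsymm_img : (⇑f.symm) '' (tgtO : Set (EuclideanSpace ℝ (Fin n))) = (srcO : Set A) :=
    f.symm.image_source_eq_target
  -- `Q` is the inverse of `pullD f`
  set Q := Ψ.pullD (EuclideanSpace ℝ (Fin n)) A f.symm hf₂ hf₁ tgtO srcO subset_rfl hsymm_img
    with hQdef
  have hco : TopologicalSpace.coinduced
      (Ψ.pullD A (EuclideanSpace ℝ (Fin n)) f hf₁ hf₂ srcO tgtO subset_rfl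
        f.image_source_eq_target) (T.τ tgtO)
      = TopologicalSpace.induced Q (T.τ tgtO) :=
    coinduced_eq_induced_of_inverse _ _
      (fun s => pullD_right_inv Ψ f hf₁ hf₂ srcO tgtO subset_rfl f.image_source_eq_target
        subset_rfl hsymm_img s)
      (fun s => pullD_left_inv Ψ f hf₁ hf₂ srcO tgtO subset_rfl f.image_source_eq_target
        subset_rfl hsymm_img s) _
  rw [hco, induced_compose]
  -- the pieces of the cover of the target
  set P : κ → Opens A := fun j =>
    ⟨f.source ∩ (d j).source, f.open_source.inter (d j).open_source⟩ with hP
  set W : κ → Opens (EuclideanSpace ℝ (Fin n)) := fun j =>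
    ⟨f '' (f.source ∩ (d j).source),
     f.isOpen_image_of_subset_source (f.open_source.inter (d j).open_source)
       inter_subset_left⟩ with hW
  have hWtgt : ∀ j, (W j : Set (EuclideanSpace ℝ (Fin n))) ⊆ (tgtO : Set _) := by
    rintro j x ⟨a, ha, rfl⟩
    exact f.map_source ha.1
  have hWsup : (⨆ j, W j) = tgtO := by
    apply Opens.ext
    rw [Opens.coe_iSup]
    calc ⋃ j, (W j : Set (EuclideanSpace ℝ (Fin n)))
        = ⋃ j, f '' (f.source ∩ (d j).source) := rfl
      _ = f '' (⋃ j, f.source ∩ (d j).source) := image_iUnion.symm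
      _ = f '' (f.source ∩ ⋃ j, (d j).source) := by rw [inter_iUnion]
      _ = f '' f.source := by rw [hcov, inter_eq_left.mpr hfU]
      _ = f.target := f.image_source_eq_target
  have hWle : ∀ j, W j ≤ tgtO := fun j => hWtgt j
  -- reduce to continuity into each piece of the cover
  have main : ∀ j, patchTop n Ψ T A U d hsm hsm' hsub ≤
      TopologicalSpace.induced
        (fun s => Ψ.res (EuclideanSpace ℝ (Fin n)) (hWle j) (Q (Ψ.res A hfU s)))
        (T.τ (W j)) := by
    intro j
    -- the transition diffeomorphism
    set φ := f.symm.trans (d j) with hφ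
    have hφ₁ : ContMDiffOn (𝓡 n) (𝓡 n) (⊤ : ℕ∞) φ φ.source := transSmooth f.symm (d j) hf₂ (hsm j)
    have hφ₂ : ContMDiffOn (𝓡 n) (𝓡 n) (⊤ : ℕ∞) φ.symm φ.target :=
      transSmoothSymm f.symm (d j) hf₁ (hsm' j)
    set W' : Opens (EuclideanSpace ℝ (Fin n)) :=
      ⟨d j '' (P j : Set A),
       (d j).isOpen_image_of_subset_source (P j).2 inter_subset_right⟩ with hW'
    have hPsub : (P j : Set A) ⊆ (d j).source := inter_subset_right
    have hPU : P j ≤ U := fun x hx => hsub j (hPsub hx)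
    have hPimg : d j '' (P j : Set A) = (W' : Set _) := rfl
    have hW'sub : (W' : Set _) ⊆ (d j).target := by
      rintro x ⟨a, ha, rfl⟩
      exact (d j).map_source (hPsub ha)
    have hW'img : (d j).symm '' (W' : Set _) = (P j : Set A) := hsymm_img_gen (d j) _ hPsub
    have hWφsub : (W j : Set _) ⊆ φ.source := by
      rintro x ⟨a, ha, rfl⟩
      rw [hφ, OpenPartialHomeomorph.trans_source]
      refine ⟨f.map_source ha.1, ?_⟩
      show f.symm (f a) ∈ (d j).source
      rw [f.left_inv ha.1]
      exact ha.2
    have hWfsub : (W j : Set _) ⊆ f.symm.source := hWtgt j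
    have hWfimg : f.symm '' (W j : Set _) = (P j : Set A) :=
      hsymm_img_gen f _ inter_subset_left
    have hWφimg : φ '' (W j : Set _) = (W' : Set _) := by
      rw [hφ, OpenPartialHomeomorph.coe_trans, image_comp, hWfimg]
      exact hPimg
    -- `X` is continuous from the patch topology
    set X := fun s => Ψ.pullD (EuclideanSpace ℝ (Fin n)) A (d j).symm (hsm' j) (hsm j)
      W' (P j) hW'sub hW'img (Ψ.res A hPU s) with hXdef
    set srcdO : Opens A := ⟨(d j).source, (d j).open_source⟩ with hsrcdO
    set tgtdO : Opens (EuclideanSpace ℝ (Fin n)) := ⟨(d j).target, (d j).open_target⟩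
      with htgtdO
    have hdsymm_img : (⇑(d j).symm) '' (tgtdO : Set _) = (srcdO : Set A) :=
      (d j).symm.image_source_eq_target
    set Qd := Ψ.pullD (EuclideanSpace ℝ (Fin n)) A (d j).symm (hsm' j) (hsm j)
      tgtdO srcdO subset_rfl hdsymm_img with hQddef
    have hXcont : patchTop n Ψ T A U d hsm hsm' hsub ≤
        TopologicalSpace.induced X (T.τ W') := by
      have h1 : patchTop n Ψ T A U d hsm hsm' hsub ≤
          TopologicalSpace.induced
            (fun s => Ψ.res A (show srcdO ≤ U from hsub j) s)
            (TopologicalSpace.coinduced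
              (Ψ.pullD A (EuclideanSpace ℝ (Fin n)) (d j) (hsm j) (hsm' j)
                srcdO tgtdO subset_rfl (d j).image_source_eq_target)
              (T.τ tgtdO)) := by
        rw [patchTop_eq_iInf]
        exact iInf_le _ j
      have h2 : TopologicalSpace.coinduced
          (Ψ.pullD A (EuclideanSpace ℝ (Fin n)) (d j) (hsm j) (hsm' j)
            srcdO tgtdO subset_rfl (d j).image_source_eq_target)
          (T.τ tgtdO) = TopologicalSpace.induced Qd (T.τ tgtdO) :=
        coinduced_eq_induced_of_inverse _ _
          (fun s => pullD_right_inv Ψ (d j) (hsm j) (hsm' j) srcdO tgtdO subset_rfl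
            (d j).image_source_eq_target subset_rfl hdsymm_img s)
          (fun s => pullD_left_inv Ψ (d j) (hsm j) (hsm' j) srcdO tgtdO subset_rfl
            (d j).image_source_eq_target subset_rfl hdsymm_img s) _
      have h3 : T.τ tgtdO ≤ TopologicalSpace.induced
          (Ψ.res (EuclideanSpace ℝ (Fin n)) (show W' ≤ tgtdO from hW'sub)) (T.τ W') :=
        continuous_iff_le_induced.mp (T.continuous_res _)
      calc patchTop n Ψ T A U d hsm hsm' hsub
          ≤ TopologicalSpace.induced (fun s => Ψ.res A (show srcdO ≤ U from hsub j) s)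
              (TopologicalSpace.induced Qd (T.τ tgtdO)) := by rw [← h2]; exact h1
        _ ≤ TopologicalSpace.induced (fun s => Ψ.res A (show srcdO ≤ U from hsub j) s)
              (TopologicalSpace.induced Qd (TopologicalSpace.induced
                (Ψ.res (EuclideanSpace ℝ (Fin n)) (show W' ≤ tgtdO from hW'sub))
                (T.τ W'))) := induced_mono (induced_mono h3)
        _ = TopologicalSpace.induced
              (Qd ∘ fun s => Ψ.res A (show srcdO ≤ U from hsub j) s)
              (TopologicalSpace.induced
                (Ψ.res (EuclideanSpace ℝ (Fin n)) (show W' ≤ tgtdO from hW'sub))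
                (T.τ W')) := induced_compose
        _ = TopologicalSpace.induced
              ((Ψ.res (EuclideanSpace ℝ (Fin n)) (show W' ≤ tgtdO from hW'sub)) ∘
                (Qd ∘ fun s => Ψ.res A (show srcdO ≤ U from hsub j) s))
              (T.τ W') := induced_compose
        _ = TopologicalSpace.induced X (T.τ W') := by
            congr 1
            funext s
            show Ψ.res (EuclideanSpace ℝ (Fin n)) (show W' ≤ tgtdO from hW'sub)
              (Qd (Ψ.res A (show srcdO ≤ U from hsub j) s)) = X s
            rw [hQddef, Ψ.pullD_res (EuclideanSpace ℝ (Fin n)) A (d j).symm (hsm' j) (hsm j)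
              subset_rfl hW'sub hdsymm_img hW'img (show W' ≤ tgtdO from hW'sub)
              (show P j ≤ srcdO from hPsub) (Ψ.res A (show srcdO ≤ U from hsub j) s)]
            rw [Ψ.res_comp A (show srcdO ≤ U from hsub j) (show P j ≤ srcdO from hPsub) s]
    -- the transition map is a homeomorphism
    have hφcont : T.τ W' ≤ TopologicalSpace.induced
        (Ψ.pullD (EuclideanSpace ℝ (Fin n)) (EuclideanSpace ℝ (Fin n)) φ hφ₁ hφ₂
          (W j) W' hWφsub hWφimg) (T.τ (W j)) :=
      continuous_iff_le_induced.mp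
        (@IsHomeomorph.continuous _ _ (T.τ W') (T.τ (W j)) _
          (T.isHomeomorph_pullD φ hφ₁ hφ₂ (W j) W' hWφsub hWφimg))
    -- identify the composite
    have hfun : (fun s => Ψ.res (EuclideanSpace ℝ (Fin n)) (hWle j) (Q (Ψ.res A hfU s)))
        = (fun s => Ψ.pullD (EuclideanSpace ℝ (Fin n)) (EuclideanSpace ℝ (Fin n)) φ hφ₁ hφ₂
            (W j) W' hWφsub hWφimg (X s)) := by
      funext s
      rw [hQdef, Ψ.pullD_res (EuclideanSpace ℝ (Fin n)) A f.symm hf₂ hf₁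
        subset_rfl hWfsub hsymm_img hWfimg (hWle j)
        (show P j ≤ srcO from inter_subset_left) (Ψ.res A hfU s)]
      rw [Ψ.res_comp A hfU (show P j ≤ srcO from inter_subset_left) s]
      rw [← pullD_left_inv Ψ (d j) (hsm j) (hsm' j) (P j) W' hPsub hPimg
        hW'sub hW'img (Ψ.res A hPU s)]
      rw [Ψ.pullD_trans (EuclideanSpace ℝ (Fin n)) A (EuclideanSpace ℝ (Fin n))
        f.symm (d j) hf₂ hf₁ (hsm j) (hsm' j) hφ₁ hφ₂ (W j) (P j) W'
        hWfsub hWfimg hPsub hPimg hWφsub hWφimg (X s)]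
    rw [hfun]
    calc patchTop n Ψ T A U d hsm hsm' hsub
        ≤ TopologicalSpace.induced X (T.τ W') := hXcont
      _ ≤ TopologicalSpace.induced X (TopologicalSpace.induced
            (Ψ.pullD (EuclideanSpace ℝ (Fin n)) (EuclideanSpace ℝ (Fin n)) φ hφ₁ hφ₂
              (W j) W' hWφsub hWφimg) (T.τ (W j))) := induced_mono hφcont
      _ = TopologicalSpace.induced
            ((Ψ.pullD (EuclideanSpace ℝ (Fin n)) (EuclideanSpace ℝ (Fin n)) φ hφ₁ hφ₂
              (W j) W' hWφsub hWφimg) ∘ X) (T.τ (W j)) := induced_compose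
  -- assemble
  calc patchTop n Ψ T A U d hsm hsm' hsub
      ≤ ⨅ j, TopologicalSpace.induced
          (fun s => Ψ.res (EuclideanSpace ℝ (Fin n)) (hWle j) (Q (Ψ.res A hfU s)))
          (T.τ (W j)) := le_iInf main
    _ = TopologicalSpace.induced
          ((fun t j => Ψ.res (EuclideanSpace ℝ (Fin n)) (le_iSup W j) t) ∘
            (fun s => Ψ.res (EuclideanSpace ℝ (Fin n)) hWsup.le (Q (Ψ.res A hfU s))))
          (@Pi.topologicalSpace κ _ (fun j => T.τ (W j))) := by
        refine Eq.symm (Eq.trans induced_iInf (iInf_congr fun j => Eq.trans induced_compose ?_))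
        congr 1
        funext s
        show Ψ.res (EuclideanSpace ℝ (Fin n)) (le_iSup W j)
          (Ψ.res (EuclideanSpace ℝ (Fin n)) hWsup.le (Q (Ψ.res A hfU s))) = _
        rw [Ψ.res_comp]
    _ = TopologicalSpace.induced
          (fun s => Ψ.res (EuclideanSpace ℝ (Fin n)) hWsup.le (Q (Ψ.res A hfU s)))
          (TopologicalSpace.induced
            (fun t j => Ψ.res (EuclideanSpace ℝ (Fin n)) (le_iSup W j) t)
            (@Pi.topologicalSpace κ _ (fun j => T.τ (W j)))) := induced_compose.symm
    _ = TopologicalSpace.induced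
          (fun s => Ψ.res (EuclideanSpace ℝ (Fin n)) hWsup.le (Q (Ψ.res A hfU s)))
          (T.τ (⨆ j, W j)) := by
        have hind : T.τ (⨆ i, W i) = TopologicalSpace.induced
            (fun s i => Ψ.res (EuclideanSpace ℝ (Fin n)) (le_iSup W i) s)
            (@Pi.topologicalSpace κ _ (fun i => T.τ (W i))) :=
          @Topology.IsInducing.eq_induced _ _ (T.τ (⨆ i, W i))
            (@Pi.topologicalSpace κ _ (fun i => T.τ (W i))) _
            (@Topology.IsEmbedding.toIsInducing _ _ (T.τ (⨆ i, W i))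
              (@Pi.topologicalSpace κ _ (fun i => T.τ (W i))) _ (T.isEmbedding_cover W))
        rw [hind]
    _ ≤ TopologicalSpace.induced
          (fun s => Ψ.res (EuclideanSpace ℝ (Fin n)) hWsup.le (Q (Ψ.res A hfU s)))
          (TopologicalSpace.induced (Ψ.res (EuclideanSpace ℝ (Fin n)) hWsup.ge)
            (T.τ tgtO)) :=
        induced_mono (continuous_iff_le_induced.mp (T.continuous_res hWsup.ge))
    _ = TopologicalSpace.induced
          ((Ψ.res (EuclideanSpace ℝ (Fin n)) hWsup.ge) ∘
            (fun s => Ψ.res (EuclideanSpace ℝ (Fin n)) hWsup.le (Q (Ψ.res A hfU s))))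
          (T.τ tgtO) := induced_compose
    _ = TopologicalSpace.induced (Q ∘ (fun s => Ψ.res A hfU s)) (T.τ tgtO) := by
        congr 1
        funext s
        show Ψ.res (EuclideanSpace ℝ (Fin n)) hWsup.ge
          (Ψ.res (EuclideanSpace ℝ (Fin n)) hWsup.le (Q (Ψ.res A hfU s))) = Q (Ψ.res A hfU s)
        rw [Ψ.res_comp]
        exact Ψ.res_id _ _ _

/-- **Lemma 3.4**: the affine-patch topology does not depend on the choice of the covering
family of affine patches. -/
lemma patchTop_indep (Ψ : SetSheaf n) (T : TopEnhancement n Ψ) (U : Opens A)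
    {κ₁ : Type} (e : κ₁ → OpenPartialHomeomorph A (EuclideanSpace ℝ (Fin n)))
    (hsm₁ : ∀ i, ContMDiffOn (𝓡 n) (𝓡 n) (⊤ : ℕ∞) (e i) (e i).source)
    (hsm₁' : ∀ i, ContMDiffOn (𝓡 n) (𝓡 n) (⊤ : ℕ∞) (e i).symm (e i).target)
    (hsub₁ : ∀ i, (e i).source ⊆ (U : Set A))
    (hcov₁ : (⋃ i, (e i).source) = (U : Set A))
    {κ₂ : Type} (d : κ₂ → OpenPartialHomeomorph A (EuclideanSpace ℝ (Fin n)))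
    (hsm₂ : ∀ j, ContMDiffOn (𝓡 n) (𝓡 n) (⊤ : ℕ∞) (d j) (d j).source)
    (hsm₂' : ∀ j, ContMDiffOn (𝓡 n) (𝓡 n) (⊤ : ℕ∞) (d j).symm (d j).target)
    (hsub₂ : ∀ j, (d j).source ⊆ (U : Set A))
    (hcov₂ : (⋃ j, (d j).source) = (U : Set A)) :
    patchTop n Ψ T A U e hsm₁ hsm₁' hsub₁ = patchTop n Ψ T A U d hsm₂ hsm₂' hsub₂ := by
  apply le_antisymm
  · conv_rhs => rw [patchTop_eq_iInf Ψ T U d hsm₂ hsm₂' hsub₂]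
    exact le_iInf fun j => patchTop_le_component Ψ T U e hsm₁ hsm₁' hsub₁ hcov₁
      (d j) (hsm₂ j) (hsm₂' j) (hsub₂ j)
  · conv_rhs => rw [patchTop_eq_iInf Ψ T U e hsm₁ hsm₁' hsub₁]
    exact le_iInf fun i => patchTop_le_component Ψ T U d hsm₂ hsm₂' hsub₂ hcov₂
      (e i) (hsm₁ i) (hsm₁' i) (hsub₁ i)

end Helpers

/-- Transporting the affine-patch topology along an equality of open sets. -/
lemma patchTop_cast (n : ℕ) (Ψ : SetSheaf n) (T : TopEnhancement n Ψ)
    (M : Type) [TopologicalSpace M] [ChartedSpace (EuclideanSpace ℝ (Fin n)) M]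
    [IsManifold (𝓡 n) (⊤ : ℕ∞) M] [SecondCountableTopology M] [T2Space M]
    {κ : Type} (e : κ → OpenPartialHomeomorph M (EuclideanSpace ℝ (Fin n)))
    (hsm : ∀ i, ContMDiffOn (𝓡 n) (𝓡 n) (⊤ : ℕ∞) (e i) (e i).source)
    (hsm' : ∀ i, ContMDiffOn (𝓡 n) (𝓡 n) (⊤ : ℕ∞) (e i).symm (e i).target)
    {S : Opens M} (h : S = ⊤) (hsub : ∀ i, (e i).source ⊆ (S : Set M)) :
    (h ▸ patchTop n Ψ T M ⊤ e hsm hsm' (fun _ => subset_univ _))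
      = patchTop n Ψ T M S e hsm hsm' hsub := by
  subst h
  rfl

/-- **Lemma 3.6** (`Ψ` is a sheaf of topological spaces on smooth `n`-manifolds).
Topologise the sets of sections of `Ψ` by the affine-patch construction (for arbitrary choices
of affine-patch data; by Lemma 3.4 the topologies do not depend on these choices).  Then for
every smooth `n`-manifold `M` and every open cover `{Nᵢ}` of `M`, the canonical injection
`Ψ(M) → ∏ᵢ Ψ(Nᵢ)` is a topological embedding whose image is exactly the set of compatible
families, i.e. the families `(sᵢ)` with `sᵢ|_{Nᵢ ∩ Nⱼ} = sⱼ|_{Nᵢ ∩ Nⱼ}` for all `i, j`; that is,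
`Ψ(M)` is the equaliser, in topological spaces, of the two restriction maps
`∏ᵢ Ψ(Nᵢ) ⇉ ∏_{(i,j)} Ψ(Nᵢ ∩ Nⱼ)`. -/
theorem sheaf_of_topological_spaces (n : ℕ) (Ψ : SetSheaf n) (T : TopEnhancement n Ψ)
    (M : Type) [TopologicalSpace M] [ChartedSpace (EuclideanSpace ℝ (Fin n)) M]
    [IsManifold (𝓡 n) (⊤ : ℕ∞) M] [SecondCountableTopology M] [T2Space M]
    {ι : Type} (N : ι → Opens M) (hcov : (⨆ i, N i) = ⊤)
    -- affine-patch data on `M` itself: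
    {κ : Type} (e : κ → OpenPartialHomeomorph M (EuclideanSpace ℝ (Fin n)))
    (hsmₑ : ∀ i, ContMDiffOn (𝓡 n) (𝓡 n) (⊤ : ℕ∞) (e i) (e i).source)
    (hsmₑ' : ∀ i, ContMDiffOn (𝓡 n) (𝓡 n) (⊤ : ℕ∞) (e i).symm (e i).target)
    (hcovₑ : (⋃ i, (e i).source) = univ)
    -- affine-patch data on each open set `N i` of the cover:
    {κ' : ι → Type} (d : ∀ i, κ' i → OpenPartialHomeomorph M (EuclideanSpace ℝ (Fin n)))
    (hsm_d : ∀ i j, ContMDiffOn (𝓡 n) (𝓡 n) (⊤ : ℕ∞) (d i j) (d i j).source)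
    (hsm_d' : ∀ i j, ContMDiffOn (𝓡 n) (𝓡 n) (⊤ : ℕ∞) (d i j).symm (d i j).target)
    (hsub_d : ∀ i j, (d i j).source ⊆ (N i : Set M))
    (hcov_d : ∀ i, (⋃ j, (d i j).source) = (N i : Set M))
    -- affine-patch data on each intersection `N i ⊓ N j`:
    {κ'' : ι → ι → Type}
    (g : ∀ i j, κ'' i j → OpenPartialHomeomorph M (EuclideanSpace ℝ (Fin n)))
    (hsm_g : ∀ i j k, ContMDiffOn (𝓡 n) (𝓡 n) (⊤ : ℕ∞) (g i j k) (g i j k).source)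
    (hsm_g' : ∀ i j k, ContMDiffOn (𝓡 n) (𝓡 n) (⊤ : ℕ∞) (g i j k).symm (g i j k).target)
    (hsub_g : ∀ i j k, (g i j k).source ⊆ (N i ⊓ N j : Opens M))
    (hcov_g : ∀ i j, (⋃ k, (g i j k).source) = (N i ⊓ N j : Opens M)) :
    -- the topology on `Ψ(M)`; by `hcov` the top open set is the supremum of the cover
    letI τM : TopologicalSpace (Ψ.sect M (⨆ i, N i)) :=
      hcov ▸ patchTop n Ψ T M ⊤ e hsmₑ hsmₑ' (fun _ => subset_univ _)
    -- the topologies on the `Ψ(Nᵢ)` and the `Ψ(Nᵢ ∩ Nⱼ)`: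
    letI τN : ∀ i, TopologicalSpace (Ψ.sect M (N i)) :=
      fun i => patchTop n Ψ T M (N i) (d i) (hsm_d i) (hsm_d' i) (hsub_d i)
    letI τNN : ∀ i j, TopologicalSpace (Ψ.sect M (N i ⊓ N j)) :=
      fun i j => patchTop n Ψ T M (N i ⊓ N j) (g i j) (hsm_g i j) (hsm_g' i j) (hsub_g i j)
    @Topology.IsEmbedding _ _ τM (@Pi.topologicalSpace ι _ τN)
        (fun s i => Ψ.res M (le_iSup N i) s) ∧
      Set.range (fun (s : Ψ.sect M (⨆ i, N i)) i => Ψ.res M (le_iSup N i) s)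
        = {v : ∀ i, Ψ.sect M (N i) |
            ∀ i j, Ψ.res M (inf_le_left : N i ⊓ N j ≤ N i) (v i)
              = Ψ.res M (inf_le_right : N i ⊓ N j ≤ N j) (v j)} := by
  have hsubE : ∀ k, (e k).source ⊆ ((⨆ i, N i : Opens M) : Set M) := by
    intro k; rw [hcov, Opens.coe_top]; exact subset_univ _
  have hM : (hcov ▸ patchTop n Ψ T M ⊤ e hsmₑ hsmₑ' (fun _ => subset_univ _)
      : TopologicalSpace (Ψ.sect M (⨆ i, N i)))
      = patchTop n Ψ T M (⨆ i, N i) e hsmₑ hsmₑ' hsubE :=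
    patchTop_cast n Ψ T M e hsmₑ hsmₑ' hcov hsubE
  constructor
  · -- the embedding statement
    set τM' : TopologicalSpace (Ψ.sect M (⨆ i, N i)) :=
      hcov ▸ patchTop n Ψ T M ⊤ e hsmₑ hsmₑ' (fun _ => subset_univ _) with hτM'
    set τN' : ∀ i, TopologicalSpace (Ψ.sect M (N i)) :=
      fun i => patchTop n Ψ T M (N i) (d i) (hsm_d i) (hsm_d' i) (hsub_d i) with hτN'
    refine @Topology.IsEmbedding.mk _ _ τM' (@Pi.topologicalSpace ι _ τN') _
      (@Topology.IsInducing.mk _ _ τM' (@Pi.topologicalSpace ι _ τN') _ ?_)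
      (fun s t hst => Ψ.locality M N s t fun i => congrFun hst i)
    rw [show τM' = patchTop n Ψ T M (⨆ i, N i) e hsmₑ hsmₑ' hsubE from hM]
    have hsmD : ∀ p : Σ i, κ' i, ContMDiffOn (𝓡 n) (𝓡 n) (⊤ : ℕ∞) (d p.1 p.2) (d p.1 p.2).source :=
      fun p => hsm_d p.1 p.2
    have hsmD' : ∀ p : Σ i, κ' i,
        ContMDiffOn (𝓡 n) (𝓡 n) (⊤ : ℕ∞) (d p.1 p.2).symm (d p.1 p.2).target :=
      fun p => hsm_d' p.1 p.2
    have hNle : ∀ i, (N i : Set M) ⊆ ((⨆ i, N i : Opens M) : Set M) := fun i => by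
      rw [Opens.coe_iSup]; exact subset_iUnion (fun i => (N i : Set M)) i
    have hsubD : ∀ p : Σ i, κ' i,
        (d p.1 p.2).source ⊆ ((⨆ i, N i : Opens M) : Set M) :=
      fun p => (hsub_d p.1 p.2).trans (hNle p.1)
    have hcovD : (⋃ p : Σ i, κ' i, (d p.1 p.2).source)
        = ((⨆ i, N i : Opens M) : Set M) := by
      rw [iUnion_sigma, Opens.coe_iSup]
      exact iUnion_congr hcov_d
    have hcovE : (⋃ k, (e k).source) = ((⨆ i, N i : Opens M) : Set M) := by
      rw [hcov, Opens.coe_top]; exact hcovₑ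
    rw [patchTop_indep Ψ T (⨆ i, N i) e hsmₑ hsmₑ' hsubE hcovE
      (fun p : Σ i, κ' i => d p.1 p.2) hsmD hsmD' hsubD hcovD]
    rw [patchTop_eq_iInf Ψ T (⨆ i, N i) (fun p : Σ i, κ' i => d p.1 p.2) hsmD hsmD' hsubD]
    rw [iInf_sigma]
    symm
    refine Eq.trans induced_iInf (iInf_congr fun i => ?_)
    rw [show τN' i = patchTop n Ψ T M (N i) (d i) (hsm_d i) (hsm_d' i) (hsub_d i) from rfl]
    rw [patchTop_eq_iInf Ψ T (N i) (d i) (hsm_d i) (hsm_d' i) (hsub_d i)]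
    rw [induced_iInf]
    rw [induced_iInf]
    refine iInf_congr fun j => ?_
    rw [induced_compose, induced_compose]
    exact congrArg (fun F => TopologicalSpace.induced F _)
      (funext fun s => Ψ.res_comp M (le_iSup N i) (hsub_d i j) s)
  · -- the image is the set of compatible families
    ext v
    simp only [mem_range, mem_setOf_eq]
    constructor
    · rintro ⟨s, rfl⟩ i j
      show Ψ.res M inf_le_left (Ψ.res M (le_iSup N i) s)
        = Ψ.res M inf_le_right (Ψ.res M (le_iSup N j) s)
      rw [Ψ.res_comp M (le_iSup N i) inf_le_left s,
        Ψ.res_comp M (le_iSup N j) inf_le_right s]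
    · intro hv
      obtain ⟨σ, hσ⟩ := Ψ.gluing M N v hv
      exact ⟨σ, funext hσ⟩
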